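/- Let V be a module over sl(n+1) ⋉ C^{n+1} and let v_μ ∈ V be a highest weight vector for sl(n+1) of weight μ. For 1 ≤ i ≤ n+1 define φ_i(v_μ) = P_i^{(μ(i))}(v_μ) + Σ_{k=1}^{i−1} Q_k^{(μ(i−1))} P_k^{(μ(i))}(v_μ). Then φ_i(v_μ) is either zero or a highest weight vector for sl(n+1) of weight μ + ω_i − ω_{i−1}. -/

import Mathlib

open Module

namespace Paper

/-- The pairing `(α_i, α_{p,q})` (value of the root `α_{p,q} = α_p + ⋯ + α_q`
on the coroot `H_i`) for `sl`, in the paper's normalization. -/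
def pair (i p q : ℕ) : ℤ :=
  (if i = p then 1 else 0) + (if i = q then 1 else 0)
    - (if i + 1 = p then 1 else 0) - (if i = q + 1 then 1 else 0)

/-- A module over `sl(N+1, ℂ)`, described through the action of the Chevalley-type
generators `H_i` (`1 ≤ i ≤ N`), `E_{p,q}`, `F_{p,q}` (`1 ≤ p ≤ q ≤ N`), subject to the
structure relations (2.7) of the paper.  Indices outside the valid ranges are junk. -/
structure SLRep (N : ℕ) (M : Type) [AddCommGroup M] [Module ℂ M] where
  H : ℕ → Module.End ℂ M
  E : ℕ → ℕ → Module.End ℂ M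
  F : ℕ → ℕ → Module.End ℂ M
  hHH : ∀ i j, 1 ≤ i → i ≤ N → 1 ≤ j → j ≤ N → ⁅H i, H j⁆ = 0
  hHE : ∀ i p q, 1 ≤ i → i ≤ N → 1 ≤ p → p ≤ q → q ≤ N →
    ⁅H i, E p q⁆ = ((pair i p q : ℤ) : ℂ) • E p q
  hHF : ∀ i p q, 1 ≤ i → i ≤ N → 1 ≤ p → p ≤ q → q ≤ N →
    ⁅H i, F p q⁆ = -(((pair i p q : ℤ) : ℂ)) • F p q
  hEE : ∀ p q r s, 1 ≤ p → p ≤ q → q ≤ N → 1 ≤ r → r ≤ s → s ≤ N →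
    ⁅E p q, E r s⁆ = (if q + 1 = r then E p s else 0) - (if p = s + 1 then E r q else 0)
  hFF : ∀ p q r s, 1 ≤ p → p ≤ q → q ≤ N → 1 ≤ r → r ≤ s → s ≤ N →
    ⁅F p q, F r s⁆ = (if p = s + 1 then F r q else 0) - (if q + 1 = r then F p s else 0)
  hEF : ∀ p q r s, 1 ≤ p → p ≤ q → q ≤ N → 1 ≤ r → r ≤ s → s ≤ N →
    ⁅E p q, F r s⁆ =
      (if p = r ∧ q = s then ∑ t ∈ Finset.Icc p q, H t else 0)
      + (if p = r ∧ q < s then -F (q + 1) s else 0)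
      + (if p = r ∧ s < q then -E (s + 1) q else 0)
      + (if q = s ∧ p < r then E p (r - 1) else 0)
      + (if q = s ∧ r < p then F r (p - 1) else 0)

/-- A module over the perfect Lie algebra `sl(n+1) ⋉ ℂ^{n+1}`:
an `sl(n+1)`-module together with the action of the radical generators
`P_j` (`1 ≤ j ≤ n+1`), subject to the remaining relations of (2.7). -/
structure SLPRep (n : ℕ) (M : Type) [AddCommGroup M] [Module ℂ M] extends SLRep n M where
  P : ℕ → Module.End ℂ M
  hHP : ∀ i j, 1 ≤ i → i ≤ n → 1 ≤ j → j ≤ n + 1 →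
    ⁅H i, P j⁆ = (((if i = j then 1 else 0) - (if i + 1 = j then 1 else 0) : ℤ) : ℂ) • P j
  hEP : ∀ p q j, 1 ≤ p → p ≤ q → q ≤ n → 1 ≤ j → j ≤ n + 1 →
    ⁅E p q, P j⁆ = if q + 1 = j then P p else 0
  hFP : ∀ p q j, 1 ≤ p → p ≤ q → q ≤ n → 1 ≤ j → j ≤ n + 1 →
    ⁅F p q, P j⁆ = if p = j then P (q + 1) else 0
  hPP : ∀ i j, 1 ≤ i → i ≤ n + 1 → 1 ≤ j → j ≤ n + 1 → ⁅P i, P j⁆ = 0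

/-- `μ_{k,s} = -((μ_k + 1) + ⋯ + (μ_s + 1))` (Definition 3.4). -/
def mus (μ : ℕ → ℤ) (k s : ℕ) : ℤ := -(∑ i ∈ Finset.Icc k s, (μ i + 1))

section Alg

variable {A : Type} [Ring A] [Algebra ℂ A]

/-- `F^{(μ(s))}_{i,j} = (∏_{k=i+1}^{j} μ_{k,s}) F_{i,j}` (Definition 3.6). -/
def Fm (F : ℕ → ℕ → A) (μ : ℕ → ℤ) (s i j : ℕ) : A :=
  (((∏ k ∈ Finset.Icc (i + 1) j, mus μ k s : ℤ)) : ℂ) • F i j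

/-- `P^{(μ(s))}_{i} = (∏_{k=1}^{i-1} μ_{k,s-1}) P_i` (Definition 3.6). -/
def Pm (P : ℕ → A) (μ : ℕ → ℤ) (s i : ℕ) : A :=
  (((∏ k ∈ Finset.Icc 1 (i - 1), mus μ k (s - 1) : ℤ)) : ℂ) • P i

/-- The elements `Q^{(μ(s))}_k` of Definition 3.7, defined by the recursion
`Q^{(μ(s))}_{s+1} = 1`, `Q^{(μ(s))}_{s-k} = ∑_{l=0}^{k} Q^{(μ(s))}_{s-l+1} F^{(μ(s))}_{s-k,s-l}`. -/
noncomputable def Qop (F : ℕ → ℕ → A) (μ : ℕ → ℤ) (s k : ℕ) : A :=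
  if s + 1 ≤ k then 1
  else ∑ l ∈ (Finset.range (s + 1 - k)).attach,
      Qop F μ s (s - l.1 + 1) * Fm F μ s k (s - l.1)
termination_by s + 1 - k
decreasing_by
  have := l.2; simp only [Finset.mem_range] at this; omega

/-- The elements `R^{(μ(s))}_{i,k}` of Definition 3.8:
`R^{(μ(s))}_{i,0} = 1`, `R^{(μ(s))}_{i,k} = ∑_{l=0}^{k-1} F^{(μ(s))}_{i+l,i+k-1} R^{(μ(s))}_{i,l}`. -/
noncomputable def Rop (F : ℕ → ℕ → A) (μ : ℕ → ℤ) (s i : ℕ) : ℕ → A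
  | 0 => 1
  | k + 1 => ∑ l ∈ (Finset.range (k + 1)).attach,
      Fm F μ s (i + l.1) (i + k) * Rop F μ s i l.1
termination_by k => k
decreasing_by
  have := l.2; simp only [Finset.mem_range] at this; omega

end Alg

variable {M : Type} [AddCommGroup M] [Module ℂ M]

/-- The operator `φ_i` at weight `μ`:
`φ_i = P^{(μ(i))}_i + ∑_{k=1}^{i-1} Q^{(μ(i-1))}_k P^{(μ(i))}_k` (Theorem 3.12). -/
noncomputable def PhiOp (F : ℕ → ℕ → Module.End ℂ M) (P : ℕ → Module.End ℂ M)
    (μ : ℕ → ℤ) (i : ℕ) : Module.End ℂ M :=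
  Pm P μ i i + ∑ k ∈ Finset.Icc 1 (i - 1), Qop F μ (i - 1) k * Pm P μ i k

/-- The weight shift `μ ↦ μ + ω_i - ω_{i-1}` in fundamental-weight coordinates. -/
def wsh (i : ℕ) (μ : ℕ → ℤ) : ℕ → ℤ := fun l =>
  μ l + (if l = i then 1 else 0) - (if l + 1 = i then 1 else 0)

/-- `v` is a highest weight vector of weight `μ` for the `sl(N+1)`-action. -/
def IsHWvec (N : ℕ) (Hop : ℕ → Module.End ℂ M) (Eop : ℕ → ℕ → Module.End ℂ M)
    (μ : ℕ → ℤ) (v : M) : Prop :=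
  (∀ i, 1 ≤ i → i ≤ N → Hop i v = ((μ i : ℤ) : ℂ) • v) ∧
  (∀ p q, 1 ≤ p → p ≤ q → q ≤ N → Eop p q v = 0)

/-- Successively apply the operators `φ_i`, for `i` running through a list,
keeping track of the weight shifts. -/
noncomputable def phiList (F : ℕ → ℕ → Module.End ℂ M) (P : ℕ → Module.End ℂ M) :
    List ℕ → (ℕ → ℤ) → M → M
  | [], _, v => v
  | i :: L, μ, v => phiList F P L (wsh i μ) (PhiOp F P μ i v)

/-- Turn a list of exponents `[k_1, …, k_r]` (starting label `j`) into the list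
`j, …, j (k_1 times), j+1, …`; applying `phiList` along it computes
`φ_{j+r-1}^{k_r}(⋯(φ_j^{k_1}(v))⋯)`. -/
def expList : List ℕ → ℕ → List ℕ
  | [], _ => []
  | m :: iv, j => List.replicate m j ++ expList iv (j + 1)

/-- The list encoding `φ_{k-1}^{i_{k-1}}(⋯(φ_1^{i_1}(v))⋯)` for the exponents `i_1, …, i_{k-1}`. -/
def evec (k : ℕ) (iv : ℕ → ℕ) : List ℕ :=
  (List.range (k - 1)).flatMap fun t => List.replicate (iv (t + 1)) (t + 1)

/-- A submodule is invariant under the `sl(N+1)`-action. -/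
def slInvariant (N : ℕ) (Hop : ℕ → Module.End ℂ M) (Eop Fop : ℕ → ℕ → Module.End ℂ M)
    (Ns : Submodule ℂ M) : Prop :=
  (∀ i, 1 ≤ i → i ≤ N → ∀ v ∈ Ns, Hop i v ∈ Ns) ∧
  (∀ p q, 1 ≤ p → p ≤ q → q ≤ N → ∀ v ∈ Ns, Eop p q v ∈ Ns ∧ Fop p q v ∈ Ns)

/-- A submodule is invariant under the full `sl(n+1) ⋉ ℂ^{n+1}`-action. -/
def gInvariant (n : ℕ) (Hop : ℕ → Module.End ℂ M) (Eop Fop : ℕ → ℕ → Module.End ℂ M)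
    (Pop : ℕ → Module.End ℂ M) (Ns : Submodule ℂ M) : Prop :=
  slInvariant n Hop Eop Fop Ns ∧ ∀ j, 1 ≤ j → j ≤ n + 1 → ∀ v ∈ Ns, Pop j v ∈ Ns

/-- `U(sl(N+1))·v`: the smallest `sl(N+1)`-invariant subspace containing `v`. -/
def slGen (N : ℕ) (Hop : ℕ → Module.End ℂ M) (Eop Fop : ℕ → ℕ → Module.End ℂ M)
    (v : M) : Submodule ℂ M :=
  sInf {Ns | slInvariant N Hop Eop Fop Ns ∧ v ∈ Ns}

/-- `U(sl(n+1) ⋉ ℂ^{n+1})·v`. -/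
def gGen (n : ℕ) (Hop : ℕ → Module.End ℂ M) (Eop Fop : ℕ → ℕ → Module.End ℂ M)
    (Pop : ℕ → Module.End ℂ M) (v : M) : Submodule ℂ M :=
  sInf {Ns | gInvariant n Hop Eop Fop Pop Ns ∧ v ∈ Ns}

end Paper

namespace Paper

section QopLemmas
variable {A : Type} [Ring A] [Algebra ℂ A]

lemma Qop_top (F : ℕ → ℕ → A) (μ : ℕ → ℤ) {s k : ℕ} (h : s + 1 ≤ k) :
    Qop F μ s k = 1 := by rw [Qop, if_pos h]

lemma Qop_rec (F : ℕ → ℕ → A) (μ : ℕ → ℤ) {s k : ℕ} (h : k ≤ s) :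
    Qop F μ s k = ∑ m ∈ Finset.Icc k s, Qop F μ s (m + 1) * Fm F μ s k m := by
  rw [Qop, if_neg (by omega)]
  rw [Finset.sum_attach (Finset.range (s + 1 - k))
    (fun l => Qop F μ s (s - l + 1) * Fm F μ s k (s - l))]
  refine Finset.sum_nbij' (i := fun l => s - l) (j := fun m => s - m) ?_ ?_ ?_ ?_ ?_
  · intro a ha; simp only [Finset.mem_range] at ha; simp only [Finset.mem_Icc]; omega
  · intro a ha; simp only [Finset.mem_Icc] at ha; simp only [Finset.mem_range]; omega
  · intro a ha; simp only [Finset.mem_range] at ha; omega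
  · intro a ha; simp only [Finset.mem_Icc] at ha; omega
  · intro a ha; rfl

lemma Fm_def' (F : ℕ → ℕ → A) (μ : ℕ → ℤ) (s i j : ℕ) :
    Fm F μ s i j = (((∏ k ∈ Finset.Icc (i + 1) j, mus μ k s : ℤ)) : ℂ) • F i j := rfl

lemma Fm_self (F : ℕ → ℕ → A) (μ : ℕ → ℤ) (s i : ℕ) :
    Fm F μ s i i = F i i := by
  rw [Fm_def', Finset.Icc_eq_empty (by omega), Finset.prod_empty]
  simp

end QopLemmas

lemma mus_split (μ : ℕ → ℤ) {t s : ℕ} (h : t ≤ s) :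
    mus μ t s = -(μ t + 1) + mus μ (t + 1) s := by
  unfold mus
  have : Finset.Icc t s = insert t (Finset.Icc (t + 1) s) := by
    ext x; simp only [Finset.mem_Icc, Finset.mem_insert]; omega
  rw [this, Finset.sum_insert (by simp)]
  ring

lemma pair_add (u k m s : ℕ) : pair u k m + pair u (m + 1) s = pair u k s := by
  unfold pair
  have h : (if u + 1 = m + 1 then (1 : ℤ) else 0) = if u = m then 1 else 0 := by
    simp
  rw [h]; ring

end Paper


namespace Paper

variable {M : Type} [AddCommGroup M] [Module ℂ M]

lemma lie_apply (a b : Module.End ℂ M) (w : M) : a (b w) = b (a w) + ⁅a, b⁆ w := by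
  rw [Ring.lie_def, LinearMap.sub_apply, Module.End.mul_apply, Module.End.mul_apply]
  abel

/-- weight vector predicate -/
def hasWt (n : ℕ) (H : ℕ → Module.End ℂ M) (ν : ℕ → ℤ) (w : M) : Prop :=
  ∀ u, 1 ≤ u → u ≤ n → H u w = ((ν u : ℤ) : ℂ) • w

lemma hasWt_congr {n : ℕ} {H : ℕ → Module.End ℂ M} {ν ν' : ℕ → ℤ} {w : M}
    (h : ∀ u, 1 ≤ u → u ≤ n → ν u = ν' u) (hw : hasWt n H ν w) : hasWt n H ν' w := by
  intro u h1 h2; rw [← h u h1 h2]; exact hw u h1 h2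

lemma hasWt_smul {n : ℕ} {H : ℕ → Module.End ℂ M} {ν : ℕ → ℤ} {w : M} (c : ℂ)
    (hw : hasWt n H ν w) : hasWt n H ν (c • w) := by
  intro u h1 h2; rw [map_smul, hw u h1 h2, smul_comm]

lemma hasWt_sum {n : ℕ} {H : ℕ → Module.End ℂ M} {ν : ℕ → ℤ} {α : Type}
    {S : Finset α} {g : α → M} (hw : ∀ x ∈ S, hasWt n H ν (g x)) :
    hasWt n H ν (∑ x ∈ S, g x) := by
  intro u h1 h2
  rw [map_sum, Finset.smul_sum]
  exact Finset.sum_congr rfl fun x hx => hw x hx u h1 h2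

variable {n : ℕ} (ρ : SLPRep n M)

lemma hasWt_F {ν : ℕ → ℤ} {w : M} (hw : hasWt n ρ.H ν w) {p q : ℕ}
    (h1 : 1 ≤ p) (h2 : p ≤ q) (h3 : q ≤ n) :
    hasWt n ρ.H (fun u => ν u - pair u p q) (ρ.F p q w) := by
  intro u hu1 hu2
  rw [lie_apply, ρ.hHF u p q hu1 hu2 h1 h2 h3, hw u hu1 hu2, map_smul,
    LinearMap.smul_apply]
  push_cast
  module

lemma hasWt_P {ν : ℕ → ℤ} {w : M} (hw : hasWt n ρ.H ν w) {j : ℕ}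
    (h1 : 1 ≤ j) (h2 : j ≤ n + 1) :
    hasWt n ρ.H
      (fun u => ν u + (if u = j then 1 else 0) - (if u + 1 = j then 1 else 0))
      (ρ.P j w) := by
  intro u hu1 hu2
  rw [lie_apply, ρ.hHP u j hu1 hu2 h1 h2, hw u hu1 hu2, map_smul,
    LinearMap.smul_apply]
  push_cast
  module

lemma hasWt_Qop (μ' : ℕ → ℤ) {s : ℕ} (hsn : s ≤ n) {ν : ℕ → ℤ} {w : M}
    (hw : hasWt n ρ.H ν w) :
    ∀ k, 1 ≤ k → k ≤ s + 1 →
      hasWt n ρ.H (fun u => ν u - if k ≤ s then pair u k s else 0)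
        (Qop ρ.F μ' s k w) := by
  suffices H : ∀ d k (ν : ℕ → ℤ) (w : M), hasWt n ρ.H ν w → s + 1 - k = d →
      1 ≤ k → k ≤ s + 1 →
      hasWt n ρ.H (fun u => ν u - if k ≤ s then pair u k s else 0)
        (Qop ρ.F μ' s k w) by
    intro k hk1 hk2; exact H _ k ν w hw rfl hk1 hk2
  intro d
  induction d using Nat.strong_induction_on with
  | _ d ih =>
    intro k ν w hw hd hk1 hk2
    rcases eq_or_lt_of_le hk2 with hk | hk
    · rw [hk, Qop_top ρ.F μ' le_rfl]
      exact hasWt_congr (fun u _ _ => by rw [if_neg (by omega), sub_zero]) hw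
    · have hks : k ≤ s := by omega
      rw [Qop_rec ρ.F μ' hks, LinearMap.sum_apply]
      apply hasWt_sum
      intro m hm
      simp only [Finset.mem_Icc] at hm
      rw [Module.End.mul_apply, Fm_def', LinearMap.smul_apply]
      have hF := hasWt_F ρ hw hk1 hm.1 (le_trans hm.2 hsn)
      have hQ := ih (s + 1 - (m + 1)) (by omega) (m + 1) (fun u => ν u - pair u k m)
        _ (hasWt_smul ((∏ x ∈ Finset.Icc (k + 1) m, mus μ' x s : ℤ) : ℂ) hF) rfl (by omega) (by omega)
      refine hasWt_congr (fun u hu1 hu2 => ?_) hQ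
      rcases eq_or_lt_of_le hm.2 with hms | hms
      · rw [hms, if_neg (by omega), if_pos hks, sub_zero]
      · rw [if_pos (by omega), if_pos hks, sub_sub, pair_add]

end Paper

namespace Paper

/-- modified weight used to express the `B`-operators via `Qop` -/
def Bmu (μ : ℕ → ℤ) (s t' : ℕ) : ℕ → ℤ := fun u =>
  if u = t' then (∑ w ∈ Finset.Icc t' s, (μ w + 1)) - 1 else μ u

lemma mus_Bmu (μ : ℕ → ℤ) {u t' s : ℕ} (hu : u ≤ t') (ht's : t' ≤ s) :
    mus (Bmu μ s t') u t' = mus μ u s := by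
  unfold mus
  congr 1
  rw [← Finset.sum_erase_add _ _ (Finset.mem_Icc.mpr ⟨hu, le_rfl⟩),
    Finset.Icc_erase_right]
  have h1 : ∀ w ∈ Finset.Ico u t', Bmu μ s t' w + 1 = μ w + 1 := by
    intro w hw
    simp only [Finset.mem_Ico] at hw
    rw [Bmu, if_neg (by omega)]
  rw [Finset.sum_congr rfl h1]
  have h2 : Bmu μ s t' t' + 1 = ∑ w ∈ Finset.Icc t' s, (μ w + 1) := by
    rw [Bmu, if_pos rfl]; ring
  rw [h2, ← Finset.Ico_add_one_right_eq_Icc t' s, ← Finset.Ico_add_one_right_eq_Icc u s,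
    Finset.sum_Ico_consecutive _ hu (by omega)]

lemma Fm_Bmu {A : Type} [Ring A] [Algebra ℂ A] (F : ℕ → ℕ → A) (μ : ℕ → ℤ)
    {j m t' s : ℕ} (hm : m ≤ t') (ht's : t' ≤ s) :
    Fm F (Bmu μ s t') t' j m = Fm F μ s j m := by
  unfold Fm
  congr 2
  refine Finset.prod_congr rfl fun x hx => ?_
  simp only [Finset.mem_Icc] at hx
  exact mus_Bmu μ (le_trans hx.2 hm) ht's

/-- the commutator value `[E_t, Q_j]` -/
noncomputable def Cop {A : Type} [Ring A] [Algebra ℂ A] (F : ℕ → ℕ → A) (H : ℕ → A)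
    (μ : ℕ → ℤ) (s t j : ℕ) : A :=
  if t < j then 0
  else if j = t then Qop F μ s (t + 1) * (H t - ((mus μ (t + 1) s : ℤ) : ℂ) • 1)
  else Qop F μ s (t + 1) *
    ((H t - (((μ t + 1 : ℤ)) : ℂ) • 1) * Qop F (Bmu μ s (t - 1)) (t - 1) j)

variable {M : Type} [AddCommGroup M] [Module ℂ M] {n : ℕ} (ρ : SLPRep n M)

lemma EF_mul {t j m : ℕ} (ht1 : 1 ≤ t) (htn : t ≤ n) (hj : 1 ≤ j) (hjm : j ≤ m)
    (hmn : m ≤ n) :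
    ρ.E t t * ρ.F j m = ρ.F j m * ρ.E t t +
      ((if t = j ∧ t = m then ρ.H t else 0) +
       (if t = j ∧ t < m then -ρ.F (t + 1) m else 0) +
       (if t = m ∧ j < t then ρ.F j (t - 1) else 0)) := by
  have h := ρ.hEF t t j m ht1 le_rfl htn hj hjm hmn
  rw [Ring.lie_def] at h
  rw [sub_eq_iff_eq_add'.mp h]
  rw [if_neg (show ¬(t = j ∧ m < t) by omega), if_neg (show ¬(t = m ∧ t < j) by omega),
    Finset.Icc_self, Finset.sum_singleton]
  abel

lemma EP_mul {t j : ℕ} (ht1 : 1 ≤ t) (htn : t ≤ n) (hj : 1 ≤ j) (hjn : j ≤ n + 1) :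
    ρ.E t t * ρ.P j = ρ.P j * ρ.E t t + (if t + 1 = j then ρ.P t else 0) := by
  have h := ρ.hEP t t j ht1 le_rfl htn hj hjn
  rw [Ring.lie_def] at h
  rw [sub_eq_iff_eq_add'.mp h]

lemma EQ_comm (μ : ℕ → ℤ) {s t : ℕ} (ht1 : 1 ≤ t) (hts : t ≤ s) (hsn : s ≤ n) :
    ∀ j, 1 ≤ j → j ≤ s + 1 →
      ρ.E t t * Qop ρ.F μ s j
        = Qop ρ.F μ s j * ρ.E t t + Cop ρ.F ρ.H μ s t j := by
  have htn : t ≤ n := le_trans hts hsn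
  suffices Hyp : ∀ d j, s + 1 - j = d → 1 ≤ j → j ≤ s + 1 →
      ρ.E t t * Qop ρ.F μ s j
        = Qop ρ.F μ s j * ρ.E t t + Cop ρ.F ρ.H μ s t j by
    intro j hj1 hj2; exact Hyp _ j rfl hj1 hj2
  intro d
  induction d using Nat.strong_induction_on with
  | _ d ih =>
    intro j hd hj1 hj2
    rcases eq_or_lt_of_le hj2 with hj | hj
    · rw [hj, Qop_top ρ.F μ le_rfl, Cop, if_pos (by omega), mul_one, one_mul,
        add_zero]
    · have hjs : j ≤ s := by omega
      -- commutator of E with the scaled F's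
      have EFm : ∀ m, j ≤ m → m ≤ s →
          ρ.E t t * Fm ρ.F μ s j m = Fm ρ.F μ s j m * ρ.E t t +
            ((∏ x ∈ Finset.Icc (j + 1) m, mus μ x s : ℤ) : ℂ) •
              ((if t = j ∧ t = m then ρ.H t else 0) +
               (if t = j ∧ t < m then -ρ.F (t + 1) m else 0) +
               (if t = m ∧ j < t then ρ.F j (t - 1) else 0)) := by
        intro m h1 h2
        rw [Fm_def', mul_smul_comm, EF_mul ρ ht1 htn hj1 h1 (le_trans h2 hsn),
          smul_add, smul_mul_assoc]
      have key : ∀ m ∈ Finset.Icc j s,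
          ρ.E t t * (Qop ρ.F μ s (m + 1) * Fm ρ.F μ s j m)
            = Qop ρ.F μ s (m + 1) * Fm ρ.F μ s j m * ρ.E t t
              + (Qop ρ.F μ s (m + 1) *
                  (((∏ x ∈ Finset.Icc (j + 1) m, mus μ x s : ℤ) : ℂ) •
                    ((if t = j ∧ t = m then ρ.H t else 0) +
                     (if t = j ∧ t < m then -ρ.F (t + 1) m else 0) +
                     (if t = m ∧ j < t then ρ.F j (t - 1) else 0)))
                + Cop ρ.F ρ.H μ s t (m + 1) * Fm ρ.F μ s j m) := by
        intro m hm
        simp only [Finset.mem_Icc] at hm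
        rw [← mul_assoc, ih (s + 1 - (m + 1)) (by omega) (m + 1) rfl (by omega)
          (by omega), add_mul, mul_assoc, EFm m hm.1 hm.2, mul_add, ← mul_assoc]
        abel
      rw [Qop_rec ρ.F μ hjs, Finset.mul_sum, Finset.sum_mul,
        Finset.sum_congr rfl key, Finset.sum_add_distrib]
      congr 1
      -- MAIN: the two residual sums assemble to `Cop j`
      rcases lt_trichotomy t j with htj | heq | htj
      · -- `t < j` : everything vanishes
        rw [Cop, if_pos htj]
        apply Finset.sum_eq_zero
        intro m hm
        simp only [Finset.mem_Icc] at hm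
        rw [if_neg (show ¬(t = j ∧ t = m) by omega),
          if_neg (show ¬(t = j ∧ t < m) by omega),
          if_neg (show ¬(t = m ∧ j < t) by omega), Cop, if_pos (by omega)]
        simp
      · subst heq
        have copz : ∀ m, t ≤ m → Cop ρ.F ρ.H μ s t (m + 1) = 0 := fun m hm => by
          rw [Cop, if_pos (by omega)]
        have step : ∀ m ∈ Finset.Icc t s,
            (Qop ρ.F μ s (m + 1) *
                ((∏ x ∈ Finset.Icc (t + 1) m, mus μ x s : ℤ) : ℂ) •
                  (((if t = t ∧ t = m then ρ.H t else 0) +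
                    if t = t ∧ t < m then -ρ.F (t + 1) m else 0) +
                    if t = m ∧ t < t then ρ.F t (t - 1) else 0) +
              Cop ρ.F ρ.H μ s t (m + 1) * Fm ρ.F μ s t m)
            = (if m = t then Qop ρ.F μ s (t + 1) * ρ.H t
               else (-((mus μ (t + 1) s : ℤ) : ℂ)) •
                 (Qop ρ.F μ s (m + 1) * Fm ρ.F μ s (t + 1) m)) := by
          intro m hm
          simp only [Finset.mem_Icc] at hm
          rw [copz m hm.1, zero_mul, add_zero,
            if_neg (show ¬(t = m ∧ t < t) by omega), add_zero]
          rcases eq_or_lt_of_le hm.1 with h1 | h1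
          · rw [if_pos (show t = t ∧ t = m by omega),
              if_neg (show ¬(t = t ∧ t < m) by omega), if_pos (show m = t by omega), ← h1,
              Finset.Icc_eq_empty (by omega), Finset.prod_empty]
            simp
          · rw [if_neg (show ¬(t = t ∧ t = m) by omega),
              if_pos (show t = t ∧ t < m by omega), if_neg (show ¬(m = t) by omega), zero_add]
            have hsplit : (∏ x ∈ Finset.Icc (t + 1) m, mus μ x s)
                = mus μ (t + 1) s * ∏ x ∈ Finset.Icc (t + 2) m, mus μ x s := by
              rw [← Finset.Ico_add_one_right_eq_Icc (t + 1) m, ← Finset.Ico_add_one_right_eq_Icc (t + 2) m,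
                Finset.prod_eq_prod_Ico_succ_bot (by omega)]
            rw [hsplit, Fm_def']
            push_cast
            simp only [mul_neg, mul_smul_comm, smul_smul, smul_neg, neg_smul, neg_neg,
              neg_mul]
        rw [Finset.sum_congr rfl step,
          ← Finset.add_sum_erase _ _ (Finset.mem_Icc.mpr ⟨le_rfl, hts⟩),
          if_pos rfl, Finset.Icc_erase_left, ← Finset.Icc_add_one_left_eq_Ioc]
        have step2 : ∀ m ∈ Finset.Icc (t + 1) s,
            (if m = t then Qop ρ.F μ s (t + 1) * ρ.H t
             else (-((mus μ (t + 1) s : ℤ) : ℂ)) •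
               (Qop ρ.F μ s (m + 1) * Fm ρ.F μ s (t + 1) m))
            = (-((mus μ (t + 1) s : ℤ) : ℂ)) •
               (Qop ρ.F μ s (m + 1) * Fm ρ.F μ s (t + 1) m) := by
          intro m hm
          simp only [Finset.mem_Icc] at hm
          rw [if_neg (by omega)]
        rw [Finset.sum_congr rfl step2, ← Finset.smul_sum]
        have hfin : (-((mus μ (t + 1) s : ℤ) : ℂ)) • ∑ m ∈ Finset.Icc (t + 1) s,
              Qop ρ.F μ s (m + 1) * Fm ρ.F μ s (t + 1) m
            = -(((mus μ (t + 1) s : ℤ) : ℂ) • Qop ρ.F μ s (t + 1)) := by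
          rcases eq_or_lt_of_le hts with h1 | h1
          · have hz : mus μ (t + 1) s = 0 := by
              unfold mus; rw [Finset.Icc_eq_empty (by omega), Finset.sum_empty, neg_zero]
            rw [hz, Finset.Icc_eq_empty (by omega), Finset.sum_empty]
            simp
          · rw [← Qop_rec ρ.F μ (show t + 1 ≤ s by omega), neg_smul]
        rw [hfin, Cop, if_neg (lt_irrefl t), if_pos rfl, mul_sub, mul_smul_comm,
          mul_one, sub_eq_add_neg]
      · -- `j < t`
        obtain ⟨t', rfl⟩ : ∃ t', t = t' + 1 := ⟨t - 1, by omega⟩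
        set t := t' + 1 with hTdef
        have hjt' : j ≤ t' := by omega
        have step : ∀ m ∈ Finset.Icc j s,
            (Qop ρ.F μ s (m + 1) *
                ((∏ x ∈ Finset.Icc (j + 1) m, mus μ x s : ℤ) : ℂ) •
                  (((if t = j ∧ t = m then ρ.H t else 0) +
                    if t = j ∧ t < m then -ρ.F (t + 1) m else 0) +
                    if t = m ∧ j < t then ρ.F j (t - 1) else 0) +
              Cop ρ.F ρ.H μ s t (m + 1) * Fm ρ.F μ s j m)
            = (if m = t then ((∏ x ∈ Finset.Icc (j + 1) t, mus μ x s : ℤ) : ℂ) •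
                  (Qop ρ.F μ s (t + 1) * ρ.F j (t - 1))
               else Cop ρ.F ρ.H μ s t (m + 1) * Fm ρ.F μ s j m) := by
          intro m hm
          simp only [Finset.mem_Icc] at hm
          rcases eq_or_ne m t with h1 | h1
          · rw [if_neg (show ¬(t = j ∧ t = m) by omega),
              if_neg (show ¬(t = j ∧ t < m) by omega),
              if_pos (show t = m ∧ j < t by omega), if_pos h1,
              Cop, if_pos (by omega), zero_mul, add_zero, zero_add, zero_add,
              mul_smul_comm, h1]
          · rw [if_neg (show ¬(t = j ∧ t = m) by omega),
              if_neg (show ¬(t = j ∧ t < m) by omega),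
              if_neg (show ¬(t = m ∧ j < t) by omega), if_neg h1]
            simp
        rw [Finset.sum_congr rfl step,
          ← Finset.add_sum_erase _ _ (Finset.mem_Icc.mpr ⟨by omega, hts⟩),
          if_pos rfl]
        have step3 : ∑ m ∈ (Finset.Icc j s).erase t,
              (if m = t then ((∏ x ∈ Finset.Icc (j + 1) t, mus μ x s : ℤ) : ℂ) •
                  (Qop ρ.F μ s (t + 1) * ρ.F j (t - 1))
               else Cop ρ.F ρ.H μ s t (m + 1) * Fm ρ.F μ s j m)
            = ∑ m ∈ Finset.Icc j t', Cop ρ.F ρ.H μ s t (m + 1) * Fm ρ.F μ s j m := by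
          rw [← Finset.sum_subset (show Finset.Icc j t' ⊆ (Finset.Icc j s).erase t by
              intro x hx
              simp only [Finset.mem_Icc] at hx
              exact Finset.mem_erase.mpr ⟨by omega, Finset.mem_Icc.mpr ⟨hx.1, by omega⟩⟩)
            (fun x hx hnx => by
              simp only [Finset.mem_erase, Finset.mem_Icc] at hx
              simp only [Finset.mem_Icc] at hnx
              rw [if_neg (show ¬(x = t) by omega), Cop, if_pos (by omega), zero_mul])]
          refine Finset.sum_congr rfl fun m hm => ?_
          simp only [Finset.mem_Icc] at hm
          rw [if_neg (show ¬(m = t) by omega)]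
        rw [step3, ← Finset.sum_erase_add _ _
            (Finset.mem_Icc.mpr ⟨hjt', le_rfl⟩ : t' ∈ Finset.Icc j t'),
          Finset.Icc_erase_right]
        have copt : Cop ρ.F ρ.H μ s t (t' + 1) = Qop ρ.F μ s (t + 1) *
            (ρ.H t - ((mus μ (t + 1) s : ℤ) : ℂ) • 1) := by
          rw [Cop, if_neg (by omega), if_pos rfl]
        have copm : ∀ m ∈ Finset.Ico j t', Cop ρ.F ρ.H μ s t (m + 1) * Fm ρ.F μ s j m
            = Qop ρ.F μ s (t + 1) * ((ρ.H t - (((μ t + 1 : ℤ)) : ℂ) • 1) *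
                Qop ρ.F (Bmu μ s t') t' (m + 1)) * Fm ρ.F μ s j m := by
          intro m hm
          simp only [Finset.mem_Ico] at hm
          rw [Cop, if_neg (by omega), if_neg (by omega)]
          norm_num
          rfl
        have copj : Cop ρ.F ρ.H μ s t j = Qop ρ.F μ s (t + 1) *
            ((ρ.H t - (((μ t + 1 : ℤ)) : ℂ) • 1) * Qop ρ.F (Bmu μ s t') t' j) := by
          rw [Cop, if_neg (by omega), if_neg (by omega)]
          norm_num
          rfl
        rw [copt, copj, Finset.sum_congr rfl copm]
        have hBrec : Qop ρ.F (Bmu μ s t') t' j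
            = ∑ m ∈ Finset.Ico j t', Qop ρ.F (Bmu μ s t') t' (m + 1) * Fm ρ.F μ s j m
              + Fm ρ.F μ s j t' := by
          rw [Qop_rec _ _ hjt', ← Finset.sum_erase_add _ _
              (Finset.mem_Icc.mpr ⟨hjt', le_rfl⟩ : t' ∈ Finset.Icc j t'),
            Finset.Icc_erase_right, Qop_top _ _ le_rfl, one_mul,
            Fm_Bmu ρ.F μ le_rfl (by omega)]
          have hc : ∀ m ∈ Finset.Ico j t',
              Qop ρ.F (Bmu μ s t') t' (m + 1) * Fm ρ.F (Bmu μ s t') t' j m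
                = Qop ρ.F (Bmu μ s t') t' (m + 1) * Fm ρ.F μ s j m := by
            intro m hm
            simp only [Finset.mem_Ico] at hm
            rw [Fm_Bmu ρ.F μ (by omega) (by omega)]
          rw [Finset.sum_congr rfl hc]
        rw [hBrec, mul_add, mul_add, Finset.mul_sum, Finset.mul_sum]
        have hsum_eq : ∀ x ∈ Finset.Ico j t',
            Qop ρ.F μ s (t + 1) * ((ρ.H t - (((μ t + 1 : ℤ)) : ℂ) • 1) *
                Qop ρ.F (Bmu μ s t') t' (x + 1)) * Fm ρ.F μ s j x
              = Qop ρ.F μ s (t + 1) * ((ρ.H t - (((μ t + 1 : ℤ)) : ℂ) • 1) *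
                (Qop ρ.F (Bmu μ s t') t' (x + 1) * Fm ρ.F μ s j x)) := by
          intro x hx
          rw [mul_assoc, mul_assoc]
        have hprod : (∏ x ∈ Finset.Icc (j + 1) t, mus μ x s)
            = (∏ x ∈ Finset.Icc (j + 1) t', mus μ x s) * mus μ t s :=
          Finset.prod_Icc_succ_top (by omega) _
        have hmus : mus μ t s = mus μ (t + 1) s - (μ t + 1) := by
          rw [mus_split μ (by omega)]; ring
        have htop : ((∏ x ∈ Finset.Icc (j + 1) t, mus μ x s : ℤ) : ℂ) •
              (Qop ρ.F μ s (t + 1) * ρ.F j (t - 1)) +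
            Qop ρ.F μ s (t + 1) * (ρ.H t - ((mus μ (t + 1) s : ℤ) : ℂ) • 1) *
              Fm ρ.F μ s j t'
            = Qop ρ.F μ s (t + 1) * ((ρ.H t - (((μ t + 1 : ℤ)) : ℂ) • 1) *
              Fm ρ.F μ s j t') := by
          rw [Fm_def', hprod, hmus, show t - 1 = t' from rfl]
          push_cast
          generalize ρ.H t = Hh
          generalize ρ.F j t' = F'
          generalize Qop ρ.F μ s (t + 1) = Q
          generalize ((∏ x ∈ Finset.Icc (j + 1) t', mus μ x s : ℤ) : ℂ) = cc
          generalize ((mus μ (t + 1) s : ℤ) : ℂ) = c1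
          generalize ((μ t : ℤ) : ℂ) = c0
          simp only [mul_sub, sub_mul, smul_mul_assoc, mul_smul_comm, one_mul, mul_one,
            mul_assoc, smul_smul]
          module
        rw [Finset.sum_congr rfl hsum_eq, ← htop]
        abel

end Paper


namespace Paper

variable {M : Type} [AddCommGroup M] [Module ℂ M] {n : ℕ} (ρ : SLPRep n M)

lemma EQ_comm_gt (μ : ℕ → ℤ) {s t : ℕ} (hst : s < t) (htn : t ≤ n) (hsn : s ≤ n) :
    ∀ j, 1 ≤ j → ρ.E t t * Qop ρ.F μ s j = Qop ρ.F μ s j * ρ.E t t := by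
  suffices Hyp : ∀ d j, s + 1 - j = d → 1 ≤ j →
      ρ.E t t * Qop ρ.F μ s j = Qop ρ.F μ s j * ρ.E t t by
    intro j hj1; exact Hyp _ j rfl hj1
  intro d
  induction d using Nat.strong_induction_on with
  | _ d ih =>
    intro j hd hj1
    by_cases hj : s + 1 ≤ j
    · rw [Qop_top ρ.F μ hj, mul_one, one_mul]
    · have hjs : j ≤ s := by omega
      rw [Qop_rec ρ.F μ hjs, Finset.mul_sum, Finset.sum_mul]
      refine Finset.sum_congr rfl fun m hm => ?_
      simp only [Finset.mem_Icc] at hm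
      have hEF : ρ.E t t * Fm ρ.F μ s j m = Fm ρ.F μ s j m * ρ.E t t := by
        rw [Fm_def', mul_smul_comm,
          EF_mul ρ (by omega) htn hj1 hm.1 (le_trans hm.2 hsn),
          if_neg (show ¬(t = j ∧ t = m) by omega),
          if_neg (show ¬(t = j ∧ t < m) by omega),
          if_neg (show ¬(t = m ∧ j < t) by omega)]
        simp [smul_mul_assoc]
      rw [← mul_assoc, ih (s + 1 - (m + 1)) (by omega) (m + 1) rfl (by omega),
        mul_assoc, hEF, ← mul_assoc]

lemma PhiOp_eq (F : ℕ → ℕ → Module.End ℂ M) (P : ℕ → Module.End ℂ M)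
    (μ : ℕ → ℤ) {i : ℕ} (hi : 1 ≤ i) :
    PhiOp F P μ i = ∑ k ∈ Finset.Icc 1 i, Qop F μ (i - 1) k * Pm P μ i k := by
  obtain ⟨i', rfl⟩ : ∃ i', i = i' + 1 := ⟨i - 1, by omega⟩
  rw [PhiOp, Finset.sum_Icc_succ_top (by omega), Nat.add_sub_cancel,
    Qop_top F μ le_rfl, one_mul, add_comm]

lemma Eall (w : M) (h : ∀ t, 1 ≤ t → t ≤ n → ρ.E t t w = 0) :
    ∀ p q, 1 ≤ p → p ≤ q → q ≤ n → ρ.E p q w = 0 := by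
  intro p q hp hpq hqn
  obtain ⟨d, rfl⟩ := Nat.exists_eq_add_of_le hpq
  clear hpq
  revert hqn
  induction d with
  | zero => exact fun hqn => h p hp (by omega)
  | succ d ihd =>
    intro hqn
    have hb := ρ.hEE p (p + d) (p + d + 1) (p + d + 1) hp (by omega) (by omega)
      (by omega) le_rfl (by omega)
    rw [if_pos rfl, if_neg (by omega), sub_zero, Ring.lie_def] at hb
    have hb2 := congrArg (fun f : Module.End ℂ M => f w) hb
    simp only [LinearMap.sub_apply, Module.End.mul_apply] at hb2
    rw [show p + (d + 1) = p + d + 1 from rfl, ← hb2,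
      h (p + d + 1) (by omega) (by omega), ihd (by omega), map_zero, map_zero,
      sub_zero]

end Paper


namespace Paper

variable {M : Type} [AddCommGroup M] [Module ℂ M] {n : ℕ} (ρ : SLPRep n M)

lemma hasWt_phi (μ : ℕ → ℤ) (v : M) (hv : IsHWvec n ρ.H ρ.E μ v)
    {i : ℕ} (hi1 : 1 ≤ i) (hi2 : i ≤ n + 1) :
    hasWt n ρ.H (wsh i μ) (PhiOp ρ.F ρ.P μ i v) := by
  rw [PhiOp_eq ρ.F ρ.P μ hi1, LinearMap.sum_apply]
  apply hasWt_sum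
  intro k hk
  simp only [Finset.mem_Icc] at hk
  rw [Module.End.mul_apply, Pm, LinearMap.smul_apply]
  have h1 := hasWt_P ρ (ν := μ) hv.1 hk.1 (le_trans hk.2 hi2)
  have h2 := hasWt_Qop ρ μ (s := i - 1) (by omega) (hasWt_smul
    ((∏ x ∈ Finset.Icc 1 (k - 1), mus μ x (i - 1) : ℤ) : ℂ) h1) k hk.1 (by omega)
  refine hasWt_congr (fun u hu1 hu2 => ?_) h2
  unfold pair wsh
  by_cases hks : k ≤ i - 1
  · rw [if_pos hks]; split_ifs <;> omega
  · rw [if_neg hks]; split_ifs <;> omega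

lemma Ephi (μ : ℕ → ℤ) (v : M) (hv : IsHWvec n ρ.H ρ.E μ v)
    {i : ℕ} (hi1 : 1 ≤ i) (hi2 : i ≤ n + 1) (t : ℕ) (ht1 : 1 ≤ t) (htn : t ≤ n) :
    ρ.E t t (PhiOp ρ.F ρ.P μ i v) = 0 := by
  have hEPv : ∀ k, 1 ≤ k → k ≤ n + 1 →
      ρ.E t t (ρ.P k v) = (if t + 1 = k then ρ.P t v else 0) := by
    intro k h1 h2
    rw [lie_apply, ρ.hEP t t k ht1 le_rfl htn h1 h2, hv.2 t t ht1 le_rfl htn,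
      map_zero, zero_add]
    by_cases hc : t + 1 = k
    · rw [if_pos hc, if_pos hc]
    · rw [if_neg hc, if_neg hc, LinearMap.zero_apply]
  rw [PhiOp_eq ρ.F ρ.P μ hi1, LinearMap.sum_apply, map_sum]
  rcases le_or_gt i t with hit | hti
  · -- `t ≥ i` : every term vanishes
    apply Finset.sum_eq_zero
    intro k hk
    simp only [Finset.mem_Icc] at hk
    have hcomm := congrArg (fun f : Module.End ℂ M => f (Pm ρ.P μ i k v))
      (EQ_comm_gt ρ μ (show i - 1 < t by omega) htn (by omega) k hk.1)
    simp only [Module.End.mul_apply] at hcomm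
    rw [Module.End.mul_apply, hcomm, Pm, LinearMap.smul_apply, map_smul,
      hEPv k hk.1 (by omega), if_neg (by omega), smul_zero, map_zero]
  · -- `t < i`
    have key : ∀ k ∈ Finset.Icc 1 i,
        ρ.E t t ((Qop ρ.F μ (i - 1) k * Pm ρ.P μ i k) v)
          = (if k = t + 1 then
              ((∏ x ∈ Finset.Icc 1 t, mus μ x (i - 1) : ℤ) : ℂ) •
                Qop ρ.F μ (i - 1) (t + 1) (ρ.P t v) else 0)
            + (if k = t then
              (((∏ x ∈ Finset.Icc 1 (t - 1), mus μ x (i - 1) : ℤ) : ℂ) *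
                (((μ t : ℤ) : ℂ) + 1 - ((mus μ (t + 1) (i - 1) : ℤ) : ℂ))) •
                Qop ρ.F μ (i - 1) (t + 1) (ρ.P t v) else 0) := by
      intro k hk
      simp only [Finset.mem_Icc] at hk
      have hcomm := congrArg (fun f : Module.End ℂ M => f (Pm ρ.P μ i k v))
        (EQ_comm ρ μ (s := i - 1) ht1 (by omega) (by omega) k hk.1 (by omega))
      simp only [Module.End.mul_apply, LinearMap.add_apply] at hcomm
      rw [Module.End.mul_apply, hcomm, Pm, LinearMap.smul_apply]
      simp only [map_smul]
      rw [hEPv k hk.1 (by omega)]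
      by_cases hk1 : k = t + 1
      · subst hk1
        rw [if_pos rfl, if_pos rfl, if_neg (by omega), add_zero, Cop,
          if_pos (by omega), LinearMap.zero_apply, smul_zero, add_zero,
          Nat.add_sub_cancel]
      · by_cases hk2 : k = t
        · subst hk2
          rw [if_neg (by omega), if_neg (by omega), if_pos rfl, zero_add,
            map_zero, smul_zero, zero_add, Cop, if_neg (lt_irrefl k), if_pos rfl,
            Module.End.mul_apply]
          have hw : ρ.H k (ρ.P k v) = ((μ k + 1 : ℤ) : ℂ) • ρ.P k v := by
            have h1 : ρ.H k (ρ.P k v) = ((μ k + (if k = k then 1 else 0)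
                - (if k + 1 = k then 1 else 0) : ℤ) : ℂ) • ρ.P k v :=
              hasWt_P ρ (ν := μ) hv.1 ht1 (by omega) k ht1 htn
            rw [if_pos rfl, if_neg (by omega),
              show (μ k + 1 - 0 : ℤ) = μ k + 1 from by ring] at h1
            exact h1
          rw [LinearMap.sub_apply, LinearMap.smul_apply, Module.End.one_apply, hw,
            ← sub_smul, map_smul, smul_smul]
          push_cast
          module
        · rw [if_neg hk1, if_neg hk2, add_zero,
            if_neg (show ¬(t + 1 = k) by omega), map_zero, smul_zero, zero_add]
          rcases lt_or_gt_of_ne (show k ≠ t from hk2) with hlt | hgt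
          · -- k < t : weight argument
            rw [Cop, if_neg (by omega), if_neg (by omega), Module.End.mul_apply,
              Module.End.mul_apply]
            have h2 := hasWt_Qop ρ (Bmu μ (i - 1) (t - 1)) (s := t - 1)
              (by omega) (hasWt_P ρ (ν := μ) hv.1 hk.1 (by omega)) k hk.1 (by omega)
            have h3 : ρ.H t (Qop ρ.F (Bmu μ (i - 1) (t - 1)) (t - 1) k (ρ.P k v))
                = (((μ t + (if t = k then 1 else 0) - (if t + 1 = k then 1 else 0))
                    - (if k ≤ t - 1 then pair t k (t - 1) else 0) : ℤ) : ℂ) •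
                  Qop ρ.F (Bmu μ (i - 1) (t - 1)) (t - 1) k (ρ.P k v) :=
              h2 t ht1 htn
            rw [if_pos (show k ≤ t - 1 by omega),
              show pair t k (t - 1) = -1 from by unfold pair; split_ifs <;> omega,
              if_neg (show ¬(t = k) by omega), if_neg (show ¬(t + 1 = k) by omega)]
              at h3
            rw [LinearMap.sub_apply, LinearMap.smul_apply, Module.End.one_apply, h3,
              show (μ t + 0 - 0 - -1 : ℤ) = μ t + 1 from by ring, sub_self,
              map_zero, smul_zero]
          · rw [Cop, if_pos hgt, LinearMap.zero_apply, smul_zero]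
    rw [Finset.sum_congr rfl key, Finset.sum_add_distrib, Finset.sum_ite_eq',
      Finset.sum_ite_eq', if_pos (Finset.mem_Icc.mpr ⟨by omega, by omega⟩),
      if_pos (Finset.mem_Icc.mpr ⟨by omega, by omega⟩)]
    have hprod : (∏ x ∈ Finset.Icc 1 t, mus μ x (i - 1))
        = (∏ x ∈ Finset.Icc 1 (t - 1), mus μ x (i - 1)) * mus μ t (i - 1) := by
      obtain ⟨t'', rfl⟩ : ∃ t'', t = t'' + 1 := ⟨t - 1, by omega⟩
      rw [Nat.add_sub_cancel]
      exact Finset.prod_Icc_succ_top (by omega) _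
    have hmus : mus μ t (i - 1) = mus μ (t + 1) (i - 1) - (μ t + 1) := by
      rw [mus_split μ (by omega)]; ring
    rw [hprod, hmus]
    push_cast
    module

end Paper


open Paper in
/-- Theorem 3.12: if `v` is an `sl(n+1)`-highest weight vector of weight `μ`
in an `sl(n+1) ⋉ ℂ^{n+1}`-module, then `φ_i(v)` is either zero or a highest weight vector
of weight `μ + ω_i - ω_{i-1}`. -/
theorem stmt_9 (n : ℕ) (M : Type) [AddCommGroup M] [Module ℂ M]
    (ρ : SLPRep n M) (μ : ℕ → ℤ) (v : M)
    (hv : IsHWvec n ρ.H ρ.E μ v) (i : ℕ) (hi1 : 1 ≤ i) (hi2 : i ≤ n + 1) :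
    PhiOp ρ.F ρ.P μ i v = 0 ∨
      (PhiOp ρ.F ρ.P μ i v ≠ 0 ∧
        IsHWvec n ρ.H ρ.E (wsh i μ) (PhiOp ρ.F ρ.P μ i v)) := by
  by_cases h : PhiOp ρ.F ρ.P μ i v = 0
  · exact Or.inl h
  · exact Or.inr ⟨h, fun u hu1 hu2 => hasWt_phi ρ μ v hv hi1 hi2 u hu1 hu2,
      fun p q hp hpq hq =>
        Eall ρ _ (fun t h1 h2 => Ephi ρ μ v hv hi1 hi2 t h1 h2) p q hp hpq hq⟩
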